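/- Let x : A × P → ℝ≥0 be a nonnegative flow on a finite directed acyclic graph that satisfies flow conservation at every node outside a set S of sources and a set C of sinks, with all flow-carrying arcs lying on source-to-sink paths. Then x admits a path decomposition: there exist nonnegative weights γ_λ^p on directed paths λ from S to C such that for every arc a and product p, x(a,p) = Σ_{λ ∋ a} γ_λ^p. -/

import Mathlib

open Finset

/-- A nonempty list of arcs is a directed source-to-sink path: consecutive arcs
are head-to-tail compatible, the first arc leaves a source of `S` and the last
arc enters a sink of `C`. -/
def IsStPath {V A : Type} (tl hd : A → V) (S C : Finset V) : List A → Prop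
  | [] => False
  | a :: rest =>
      tl a ∈ S ∧ List.Chain' (fun e f => hd e = tl f) (a :: rest) ∧
      hd ((a :: rest).getLast (List.cons_ne_nil a rest)) ∈ C

section Aux

variable {V A : Type} (tl hd : A → V)

/-- Telescoping count identity along a head-to-tail chain. -/
lemma fpd_tele [DecidableEq V] (v : V) :
    ∀ (a : A) (l : List A), List.Chain' (fun e f => hd e = tl f) (a :: l) →
      (a :: l).countP (fun b => decide (hd b = v)) + (if tl a = v then 1 else 0)
        = (a :: l).countP (fun b => decide (tl b = v)) +
          (if hd ((a :: l).getLast (List.cons_ne_nil a l)) = v then 1 else 0) := by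
  intro a l
  induction l generalizing a with
  | nil =>
      intro _
      simp [List.countP_cons]
      by_cases h1 : hd a = v <;> by_cases h2 : tl a = v <;> simp [h1, h2] <;> omega
  | cons b l ih =>
      intro hch
      unfold List.Chain' at hch
      rw [List.isChain_cons_cons] at hch
      have h1 : hd a = tl b := hch.1
      have h2 := ih b hch.2
      have hgl : (a :: b :: l).getLast (List.cons_ne_nil a (b :: l))
          = (b :: l).getLast (List.cons_ne_nil b l) := by
        simp [List.getLast_cons]
      rw [hgl]
      have e1 : (a :: b :: l).countP (fun c => decide (hd c = v))
          = (b :: l).countP (fun c => decide (hd c = v)) + (if hd a = v then 1 else 0) := by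
        rw [List.countP_cons]; simp
      have e2 : (a :: b :: l).countP (fun c => decide (tl c = v))
          = (b :: l).countP (fun c => decide (tl c = v)) + (if tl a = v then 1 else 0) := by
        rw [List.countP_cons]; simp
      rw [e1, e2, h1]
      by_cases hA : tl a = v <;> by_cases hB : tl b = v <;>
        simp only [hA, hB, if_true, if_false] at h2 ⊢ <;> omega

lemma fpd_isStPath_iff (S C : Finset V) (l : List A) (h : l ≠ []) :
    IsStPath tl hd S C l ↔
      tl (l.head h) ∈ S ∧ List.Chain' (fun e f => hd e = tl f) l ∧
        hd (l.getLast h) ∈ C := by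
  cases l with
  | nil => exact absurd rfl h
  | cons a rest => simp [IsStPath]

variable (S C : Finset V) (rank : V → ℕ)

lemma fpd_nodup (hacyc : ∀ a, rank (tl a) < rank (hd a))
    (l : List A) (hch : List.Chain' (fun e f => hd e = tl f) l) : l.Nodup := by
  have h : List.Chain' (fun e f => rank (tl e) < rank (tl f)) l := by
    refine List.IsChain.imp ?_ hch
    intro e f hef
    have h := hacyc e
    rw [hef] at h
    exact h
  haveI : IsTrans A (fun e f => rank (tl e) < rank (tl f)) :=
    ⟨fun _ _ _ h1 h2 => lt_trans h1 h2⟩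
  have hp := List.isChain_iff_pairwise.mp h
  exact hp.imp (fun hlt => by rintro rfl; exact lt_irrefl _ hlt)

end Aux

section Single

variable {V A : Type} [Fintype V] [Fintype A] [DecidableEq V] [DecidableEq A]
variable (tl hd : A → V) (S C : Finset V) (rank : V → ℕ)

/-- Forward extension of a positive-flow arc to a sink. -/
lemma fpd_forward (hacyc : ∀ a, rank (tl a) < rank (hd a)) (hS : ∀ a, hd a ∉ S)
    (x : A → ℝ) (hx : ∀ a, 0 ≤ x a)
    (hcons : ∀ v, v ∉ S → v ∉ C →
      ∑ a ∈ univ.filter (fun a => hd a = v), x a =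
      ∑ a ∈ univ.filter (fun a => tl a = v), x a) :
    ∀ (k : ℕ) (a : A), 0 < x a → univ.sup rank - rank (hd a) < k →
      ∃ l : List A, List.Chain' (fun e f => hd e = tl f) (a :: l) ∧
        (∀ b ∈ a :: l, 0 < x b) ∧
        hd ((a :: l).getLast (List.cons_ne_nil a l)) ∈ C := by
  intro k
  induction k with
  | zero => intro a _ h; omega
  | succ k ih =>
      intro a hpos hk
      by_cases hc : hd a ∈ C
      · exact ⟨[], List.isChain_singleton a, by
          intro b hb; simp at hb; subst hb; exact hpos, by simpa using hc⟩
      · have hs : hd a ∉ S := hS a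
        have hsum := hcons (hd a) hs hc
        have hmem : a ∈ univ.filter (fun b => hd b = hd a) := by simp
        have h1 : x a ≤ ∑ b ∈ univ.filter (fun b => hd b = hd a), x b :=
          Finset.single_le_sum (fun b _ => hx b) hmem
        have h2 : 0 < ∑ b ∈ univ.filter (fun b => tl b = hd a), x b := by
          rw [← hsum]; linarith
        obtain ⟨b, hb, hbpos⟩ : ∃ b ∈ univ.filter (fun b => tl b = hd a), 0 < x b := by
          by_contra h
          push_neg at h
          have : ∑ b ∈ univ.filter (fun b => tl b = hd a), x b ≤ 0 :=
            Finset.sum_nonpos h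
          linarith
        simp only [Finset.mem_filter, Finset.mem_univ, true_and] at hb
        have hrk : rank (hd a) < rank (hd b) := by
          have := hacyc b; rw [hb] at this; omega
        have hrb : rank (hd b) ≤ univ.sup rank := Finset.le_sup (Finset.mem_univ _)
        have hk' : univ.sup rank - rank (hd b) < k := by omega
        obtain ⟨l, hch, hposl, hlast⟩ := ih b hbpos hk'
        refine ⟨b :: l, List.isChain_cons_cons.mpr ⟨hb.symm, hch⟩, ?_, ?_⟩
        · intro c hcmem
          rcases List.mem_cons.mp hcmem with h | h
          · exact h ▸ hpos
          · exact hposl c h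
        · rwa [List.getLast_cons (List.cons_ne_nil b l)]

/-- Backward extension of a positive-flow arc to a source. -/
lemma fpd_backward (hacyc : ∀ a, rank (tl a) < rank (hd a)) (hC : ∀ a, tl a ∉ C)
    (x : A → ℝ) (hx : ∀ a, 0 ≤ x a)
    (hcons : ∀ v, v ∉ S → v ∉ C →
      ∑ a ∈ univ.filter (fun a => hd a = v), x a =
      ∑ a ∈ univ.filter (fun a => tl a = v), x a) :
    ∀ (k : ℕ) (a : A), 0 < x a → rank (tl a) < k →
      ∃ l : List A, List.Chain' (fun e f => hd e = tl f) (l ++ [a]) ∧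
        (∀ b ∈ l, 0 < x b) ∧
        tl ((l ++ [a]).head (by simp)) ∈ S := by
  intro k
  induction k with
  | zero => intro a _ h; omega
  | succ k ih =>
      intro a hpos hk
      by_cases hs : tl a ∈ S
      · exact ⟨[], by simpa [List.Chain'] using List.isChain_singleton a, by simp, by simpa using hs⟩
      · have hc : tl a ∉ C := hC a
        have hsum := hcons (tl a) hs hc
        have hmem : a ∈ univ.filter (fun b => tl b = tl a) := by simp
        have h1 : x a ≤ ∑ b ∈ univ.filter (fun b => tl b = tl a), x b :=
          Finset.single_le_sum (fun b _ => hx b) hmem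
        have h2 : 0 < ∑ b ∈ univ.filter (fun b => hd b = tl a), x b := by
          rw [hsum]; linarith
        obtain ⟨b, hb, hbpos⟩ : ∃ b ∈ univ.filter (fun b => hd b = tl a), 0 < x b := by
          by_contra h
          push_neg at h
          have : ∑ b ∈ univ.filter (fun b => hd b = tl a), x b ≤ 0 :=
            Finset.sum_nonpos h
          linarith
        simp only [Finset.mem_filter, Finset.mem_univ, true_and] at hb
        have hrk : rank (tl b) < rank (tl a) := by
          have := hacyc b; rw [hb] at this; omega
        have hk' : rank (tl b) < k := by omega
        obtain ⟨l, hch, hposl, hhead⟩ := ih b hbpos hk'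
        refine ⟨l ++ [b], ?_, ?_, ?_⟩
        · rw [List.append_assoc]
          unfold List.Chain'
          rw [List.isChain_append]
          refine ⟨(List.isChain_append.mp hch).1, ?_, ?_⟩
          · simp [hb]
          · intro c hc d hd'
            have := (List.isChain_append.mp hch).2.2 c hc
            simp at hd'
            subst hd'
            exact this b rfl
        · intro c hc
          rcases List.mem_append.mp hc with hc | hc
          · exact hposl c hc
          · simp at hc; subst hc; exact hbpos
        · have : ((l ++ [b]) ++ [a]).head (by simp) = (l ++ [b]).head (by simp) := by
            rcases l with _ | ⟨e, l⟩ <;> simp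
          rw [this]
          convert hhead using 2

/-- Single-commodity flow decomposition, by induction on the support size. -/
lemma fpd_single (hSC : Disjoint S C)
    (hacyc : ∀ a, rank (tl a) < rank (hd a))
    (hS : ∀ a, hd a ∉ S) (hC : ∀ a, tl a ∉ C) :
    ∀ (n : ℕ) (x : A → ℝ), (univ.filter fun a => 0 < x a).card ≤ n →
      (∀ a, 0 ≤ x a) →
      (∀ v, v ∉ S → v ∉ C →
        ∑ a ∈ univ.filter (fun a => hd a = v), x a =
        ∑ a ∈ univ.filter (fun a => tl a = v), x a) →
      ∃ (Λ : Finset (List A)) (γ : List A → ℝ),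
        (∀ l ∈ Λ, IsStPath tl hd S C l) ∧ (∀ l, 0 ≤ γ l) ∧
        (∀ a, x a = ∑ l ∈ Λ.filter (fun l => a ∈ l), γ l) := by
  intro n
  induction n with
  | zero =>
      intro x hcard hx _
      refine ⟨∅, fun _ => 0, by simp, fun _ => le_refl 0, ?_⟩
      intro a
      have : a ∉ univ.filter fun a => 0 < x a := by
        intro h
        have := Finset.card_pos.mpr ⟨a, h⟩
        omega
      simp at this
      have := hx a
      simp
      linarith
  | succ n ih =>
      intro x hcard hx hcons
      by_cases hsupp : (univ.filter fun a => 0 < x a) = ∅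
      · refine ⟨∅, fun _ => 0, by simp, fun _ => le_refl 0, ?_⟩
        intro a
        have : a ∉ univ.filter fun a => 0 < x a := by rw [hsupp]; simp
        simp at this
        have := hx a
        simp
        linarith
      · obtain ⟨a₀, ha₀⟩ := Finset.nonempty_of_ne_empty hsupp
        simp only [Finset.mem_filter, Finset.mem_univ, true_and] at ha₀
        -- build a source-to-sink path through a₀
        obtain ⟨lf, hchf, hposf, hlastf⟩ :=
          fpd_forward tl hd S C rank hacyc hS x hx hcons
            (univ.sup rank - rank (hd a₀) + 1) a₀ ha₀ (by omega)
        obtain ⟨lb, hchb, hposb, hheadb⟩ :=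
          fpd_backward tl hd S C rank hacyc hC x hx hcons
            (rank (tl a₀) + 1) a₀ ha₀ (by omega)
        have hch₀' : List.Chain' (fun e f => hd e = tl f) (lb ++ a₀ :: lf) := by
          have heq : lb ++ a₀ :: lf = (lb ++ [a₀]) ++ lf := by simp
          rw [heq]
          unfold List.Chain'
          rw [List.isChain_append]
          refine ⟨hchb, (List.isChain_cons.mp hchf).2, ?_⟩
          intro c hc d hd'
          have hc' : c = a₀ := by
            have hgl : (lb ++ [a₀]).getLast? = some a₀ := by
              rw [List.getLast?_append]; simp
            rw [hgl] at hc
            exact (Option.some_inj.mp hc).symm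
          subst hc'
          exact (List.isChain_cons.mp hchf).1 d hd'
        have hpos₀' : ∀ b ∈ lb ++ a₀ :: lf, 0 < x b := by
          intro b hb
          rcases List.mem_append.mp hb with hb | hb
          · exact hposb b hb
          · exact hposf b hb
        have hpath' : IsStPath tl hd S C (lb ++ a₀ :: lf) := by
          rw [fpd_isStPath_iff tl hd S C _ (by simp)]
          refine ⟨?_, hch₀', ?_⟩
          · have h1 : (lb ++ a₀ :: lf).head (by simp) = (lb ++ [a₀]).head (by simp) := by
              rcases lb with _ | ⟨f, lb'⟩ <;> simp
            rw [h1]; exact hheadb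
          · have h2 : (lb ++ a₀ :: lf).getLast (by simp)
                = (a₀ :: lf).getLast (List.cons_ne_nil a₀ lf) := by
              rw [List.getLast_append]; simp
            rw [h2]; exact hlastf
        set l₀ : List A := lb ++ a₀ :: lf with hl₀
        have hl₀ne : l₀ ≠ [] := by simp [hl₀]
        have hch₀ : List.Chain' (fun e f => hd e = tl f) l₀ := hch₀'
        have hpos₀ : ∀ b ∈ l₀, 0 < x b := hpos₀'
        have hpath : IsStPath tl hd S C l₀ := hpath'
        have hnd : l₀.Nodup := fpd_nodup tl hd rank hacyc l₀ hch₀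
        -- minimum flow along the path
        obtain ⟨m, hm, hmin⟩ := Finset.exists_min_image l₀.toFinset x
          ⟨a₀, by simp [hl₀]⟩
        rw [List.mem_toFinset] at hm
        set δ : ℝ := x m with hδ
        have hδpos : 0 < δ := hpos₀ m hm
        have hδle : ∀ b ∈ l₀, δ ≤ x b := fun b hb =>
          hmin b (List.mem_toFinset.mpr hb)
        -- residual flow
        set x' : A → ℝ := fun a => x a - if a ∈ l₀ then δ else 0 with hx'
        have hx'nonneg : ∀ a, 0 ≤ x' a := by
          intro a
          simp only [hx']
          by_cases h : a ∈ l₀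
          · simp [h]; linarith [hδle a h]
          · simp [h]; exact hx a
        have hx'le : ∀ a, x' a ≤ x a := by
          intro a
          simp only [hx']
          by_cases h : a ∈ l₀ <;> simp [h]
          linarith
        -- support shrinks
        have hsub : (univ.filter fun a => 0 < x' a) ⊂ (univ.filter fun a => 0 < x a) := by
          constructor
          · intro a ha
            simp only [Finset.mem_filter, Finset.mem_univ, true_and] at ha ⊢
            linarith [hx'le a]
          · intro h
            have hm1 : m ∈ univ.filter fun a => 0 < x a := by
              simp only [Finset.mem_filter, Finset.mem_univ, true_and]
              exact hpos₀ m hm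
            have hm2 := h hm1
            simp only [Finset.mem_filter, Finset.mem_univ, true_and, hx'] at hm2
            simp [hm, hδ] at hm2
        have hcard' : (univ.filter fun a => 0 < x' a).card ≤ n := by
          have := Finset.card_lt_card hsub
          omega
        -- conservation for the residual
        have hcount : ∀ v : V, v ∉ S → v ∉ C →
            (univ.filter (fun a => hd a = v) |>.filter (· ∈ l₀)).card =
            (univ.filter (fun a => tl a = v) |>.filter (· ∈ l₀)).card := by
          intro v hvS hvC
          have e1 : (univ.filter (fun a => hd a = v) |>.filter (· ∈ l₀)) =
              l₀.toFinset.filter (fun a => hd a = v) := by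
            ext a; simp [and_comm]
          have e2 : (univ.filter (fun a => tl a = v) |>.filter (· ∈ l₀)) =
              l₀.toFinset.filter (fun a => tl a = v) := by
            ext a; simp [and_comm]
          rw [e1, e2]
          have c1 : (l₀.toFinset.filter (fun a => hd a = v)).card =
              l₀.countP (fun a => decide (hd a = v)) := by
            have h := List.toFinset_filter l₀ (fun a => decide (hd a = v))
            simp only [decide_eq_true_eq] at h
            rw [← h, List.toFinset_card_of_nodup (hnd.filter _),
              List.countP_eq_length_filter]
          have c2 : (l₀.toFinset.filter (fun a => tl a = v)).card =
              l₀.countP (fun a => decide (tl a = v)) := by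
            have h := List.toFinset_filter l₀ (fun a => decide (tl a = v))
            simp only [decide_eq_true_eq] at h
            rw [← h, List.toFinset_card_of_nodup (hnd.filter _),
              List.countP_eq_length_filter]
          rw [c1, c2]
          rcases hl : l₀ with _ | ⟨e, rest⟩
          · exact absurd hl hl₀ne
          · have htele := fpd_tele tl hd v e rest (hl ▸ hch₀)
            have hheadS : tl e ∈ S := by
              have := hpath
              rw [hl] at this
              exact this.1
            have hlastC : hd ((e :: rest).getLast (List.cons_ne_nil e rest)) ∈ C := by
              have := hpath
              rw [hl] at this
              exact this.2.2
            have hne1 : tl e ≠ v := fun h => hvS (h ▸ hheadS)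
            have hne2 : hd ((e :: rest).getLast (List.cons_ne_nil e rest)) ≠ v :=
              fun h => hvC (h ▸ hlastC)
            simp only [hne1, hne2, if_false] at htele
            omega
        have hcons' : ∀ v, v ∉ S → v ∉ C →
            ∑ a ∈ univ.filter (fun a => hd a = v), x' a =
            ∑ a ∈ univ.filter (fun a => tl a = v), x' a := by
          intro v hvS hvC
          have key : ∀ F : Finset A, ∑ a ∈ F, x' a =
              (∑ a ∈ F, x a) - (F.filter (· ∈ l₀)).card * δ := by
            intro F
            simp only [hx']
            rw [Finset.sum_sub_distrib]
            congr 1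
            simp only [← List.mem_toFinset]
            rw [Finset.sum_ite_mem]
            have h : (F ∩ l₀.toFinset) = F.filter (· ∈ l₀) := by
              ext a; simp [and_comm]
            rw [h, Finset.sum_const, nsmul_eq_mul]
            have hcc : F.filter (fun a => a ∈ l₀) =
                F.filter (fun a => a ∈ l₀.toFinset) := by
              ext a; simp
            rw [hcc]
          rw [key, key, hcons v hvS hvC, hcount v hvS hvC]
        obtain ⟨Λ', γ', hΛ'path, hγ'nonneg, hΛ'sum⟩ := ih x' hcard' hx'nonneg hcons'
        -- combine
        refine ⟨insert l₀ Λ',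
          fun l => (if l ∈ Λ' then γ' l else 0) + (if l = l₀ then δ else 0), ?_, ?_, ?_⟩
        · intro l hl
          rcases Finset.mem_insert.mp hl with hl | hl
          · exact hl ▸ hpath
          · exact hΛ'path l hl
        · intro l
          have h0 := hγ'nonneg l
          have e1 : (0:ℝ) ≤ if l ∈ Λ' then γ' l else 0 := by
            by_cases h1 : l ∈ Λ' <;> simp [h1, h0]
          have e2 : (0:ℝ) ≤ if l = l₀ then δ else 0 := by
            by_cases h2 : l = l₀ <;> simp [h2] <;> linarith
          exact add_nonneg e1 e2
        · intro a
          rw [Finset.sum_add_distrib]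
          have t2 : ∑ l ∈ (insert l₀ Λ').filter (fun l => a ∈ l),
              (if l = l₀ then δ else 0) = if a ∈ l₀ then δ else 0 := by
            rw [Finset.sum_ite_eq' _ l₀ (fun _ => δ)]
            by_cases h : a ∈ l₀ <;> simp [h]
          have t1 : ∑ l ∈ (insert l₀ Λ').filter (fun l => a ∈ l),
              (if l ∈ Λ' then γ' l else 0) =
              ∑ l ∈ Λ'.filter (fun l => a ∈ l), γ' l := by
            refine ((Finset.sum_subset (Finset.filter_subset_filter _
              (Finset.subset_insert l₀ Λ')) ?_).symm).trans ?_
            · intro l hl hlnot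
              simp only [Finset.mem_filter, Finset.mem_insert] at hl hlnot
              have hn : l ∉ Λ' := fun h => hlnot ⟨h, hl.2⟩
              simp [hn]
            · exact Finset.sum_congr rfl (fun l hl => by
                simp only [Finset.mem_filter] at hl
                simp [hl.1])
          rw [t1, t2, ← hΛ'sum a]
          simp only [hx']
          ring

end Single

/-- **Flow decomposition.**  Let `x ≥ 0` be a flow on a finite DAG (acyclicity is
witnessed by a rank function increasing along arcs), where the sources `S` have
no incoming arcs, the sinks `C` have no outgoing arcs, and flow conservation
holds for every product at every node outside `S ∪ C` (so every flow-carrying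
arc lies on a source-to-sink path).  Then `x` admits a path decomposition: there
are finitely many source-to-sink paths `λ` and nonnegative weights `γ_λ^p` with
`x(a,p) = ∑_{λ ∋ a} γ_λ^p` for every arc `a` and product `p`. -/
theorem flow_path_decomposition {V A P : Type}
    [Fintype V] [Fintype A] [Fintype P] [DecidableEq V] [DecidableEq A]
    (tl hd : A → V) (S C : Finset V) (hSC : Disjoint S C)
    (rank : V → ℕ) (hacyc : ∀ a, rank (tl a) < rank (hd a))
    (hS : ∀ a, hd a ∉ S) (hC : ∀ a, tl a ∉ C)
    (x : A → P → ℝ) (hx : ∀ a p, 0 ≤ x a p)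
    (hcons : ∀ v, v ∉ S → v ∉ C → ∀ p : P,
      ∑ a ∈ univ.filter (fun a => hd a = v), x a p =
      ∑ a ∈ univ.filter (fun a => tl a = v), x a p) :
    ∃ (Λ : Finset (List A)) (γ : List A → P → ℝ),
      (∀ l ∈ Λ, IsStPath tl hd S C l) ∧
      (∀ l p, 0 ≤ γ l p) ∧
      (∀ a p, x a p = ∑ l ∈ Λ.filter (fun l => a ∈ l), γ l p) := by
  have h : ∀ p : P, ∃ (Λ : Finset (List A)) (γ : List A → ℝ),
      (∀ l ∈ Λ, IsStPath tl hd S C l) ∧ (∀ l, 0 ≤ γ l) ∧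
      (∀ a, x a p = ∑ l ∈ Λ.filter (fun l => a ∈ l), γ l) := by
    intro p
    exact fpd_single tl hd S C rank hSC hacyc hS hC
      (univ.filter fun a => 0 < x a p).card (fun a => x a p) le_rfl
      (fun a => hx a p) (fun v hv1 hv2 => hcons v hv1 hv2 p)
  choose Λp γp hpath hnonneg hsum using h
  classical
  refine ⟨Finset.univ.biUnion Λp, fun l p => if l ∈ Λp p then γp p l else 0, ?_, ?_, ?_⟩
  · intro l hl
    obtain ⟨p, _, hp⟩ := Finset.mem_biUnion.mp hl
    exact hpath p l hp
  · intro l p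
    by_cases h : l ∈ Λp p <;> simp [h]
    exact hnonneg p l
  · intro a p
    rw [hsum p a]
    have hsub2 : (Λp p).filter (fun l => a ∈ l) ⊆
        (Finset.univ.biUnion Λp).filter (fun l => a ∈ l) :=
      Finset.filter_subset_filter _
        (fun l hl => Finset.mem_biUnion.mpr ⟨p, Finset.mem_univ p, hl⟩)
    calc ∑ l ∈ (Λp p).filter (fun l => a ∈ l), γp p l
        = ∑ l ∈ (Λp p).filter (fun l => a ∈ l),
            (if l ∈ Λp p then γp p l else 0) :=
          Finset.sum_congr rfl (fun l hl => by
            simp only [Finset.mem_filter] at hl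
            simp [hl.1])
      _ = ∑ l ∈ (Finset.univ.biUnion Λp).filter (fun l => a ∈ l),
            (if l ∈ Λp p then γp p l else 0) :=
          Finset.sum_subset hsub2 (fun l hl hlnot => by
            simp only [Finset.mem_filter] at hl hlnot
            have hn : l ∉ Λp p := fun h => hlnot ⟨h, hl.2⟩
            simp [hn])
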